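/- If the matrix A_1 (as defined via the exponential transform of the moments) is nonsingular, then the moment problem m_k = \sum_{j=1}^{n_x} x_j^k - \sum_{j=1}^{n_y} y_j^k (k = 1,...,K = n_x+n_y) has a unique solution, up to reordering of the branch values. -/

import Mathlib

open Finset
noncomputable section
namespace S10
open PowerSeries

abbrev PS := PowerSeries ℝ

def S (z : ℝ) : PS := PowerSeries.mk fun k => z ^ k

lemma geom (z : ℝ) : (1 - PowerSeries.C z * PowerSeries.X) * S z = 1 := by
  have : (PowerSeries.C z * PowerSeries.X) * S z = PowerSeries.X * (PowerSeries.C z * S z) := by ring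
  ext n
  rw [sub_mul, one_mul, map_sub, this]
  cases n with
  | zero => simp [S]
  | succ n => simp [S, coeff_succ_X_mul, coeff_mk, pow_succ, mul_comm]

def D (f : PS) : PS := PowerSeries.mk fun k => (k : ℝ) * PowerSeries.coeff k f

lemma coeff_D (f : PS) (k : ℕ) : PowerSeries.coeff k (D f) = k * PowerSeries.coeff k f := by
  simp [D, coeff_mk]

lemma D_mul (f g : PS) : D (f * g) = D f * g + f * D g := by
  ext n
  rw [map_add, coeff_D, PowerSeries.coeff_mul, PowerSeries.coeff_mul, PowerSeries.coeff_mul,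
    Finset.mul_sum, ← Finset.sum_add_distrib]
  refine Finset.sum_congr rfl fun p hp => ?_
  rw [Finset.HasAntidiagonal.mem_antidiagonal] at hp
  rw [coeff_D, coeff_D]
  push_cast [← hp]
  ring

lemma D_one : D 1 = 0 := by
  ext n
  simp [coeff_D, PowerSeries.coeff_one]

-- product rule over a Finset
lemma D_prod {ι : Type*} (s : Finset ι) (f g : ι → PS)
    (h : ∀ i ∈ s, D (f i) = g i * f i) :
    D (∏ i ∈ s, f i) = (∑ i ∈ s, g i) * ∏ i ∈ s, f i := by
  classical
  induction s using Finset.induction_on with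
  | empty => simp [D_one]
  | insert a s' hni ih =>
    rw [Finset.prod_insert hni, Finset.sum_insert hni, D_mul,
      h a (Finset.mem_insert_self a s'), ih (fun i hi => h i (Finset.mem_insert_of_mem hi))]
    ring

lemma D_S (z : ℝ) : D (S z) = (PowerSeries.C z * PowerSeries.X * S z) * S z := by
  have hSS : ∀ k : ℕ, PowerSeries.coeff k (S z * S z) = (k + 1 : ℝ) * z ^ k := by
    intro k
    rw [PowerSeries.coeff_mul]
    have : ∀ p ∈ Finset.HasAntidiagonal.antidiagonal k,
        PowerSeries.coeff p.1 (S z) * PowerSeries.coeff p.2 (S z) = z ^ k := by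
      intro p hp
      rw [Finset.HasAntidiagonal.mem_antidiagonal] at hp
      simp [S, coeff_mk, ← pow_add, hp]
    rw [Finset.sum_congr rfl this, Finset.sum_const, Finset.Nat.card_antidiagonal]
    push_cast; ring
  have hcomm : PowerSeries.C z * PowerSeries.X * S z * S z
      = PowerSeries.X * (PowerSeries.C z * (S z * S z)) := by ring
  ext n
  rw [coeff_D, hcomm]
  cases n with
  | zero => simp [S]
  | succ n =>
    rw [coeff_succ_X_mul, PowerSeries.coeff_C_mul, hSS]
    simp [S, coeff_mk, pow_succ]
    ring

lemma D_lin (z : ℝ) :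
    D (1 - PowerSeries.C z * PowerSeries.X) =
      (-(PowerSeries.C z * PowerSeries.X) * S z) * (1 - PowerSeries.C z * PowerSeries.X) := by
  have h1 : (-(PowerSeries.C z * PowerSeries.X) * S z) * (1 - PowerSeries.C z * PowerSeries.X)
      = -(PowerSeries.C z * PowerSeries.X) * ((1 - PowerSeries.C z * PowerSeries.X) * S z) := by ring
  rw [h1, geom, mul_one]
  ext n
  rw [coeff_D]
  cases n with
  | zero => simp
  | succ n =>
    rw [map_sub]
    have : PowerSeries.C z * PowerSeries.X = PowerSeries.X * PowerSeries.C z := by ring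
    rw [this]
    cases n with
    | zero => simp [coeff_succ_X_mul, PowerSeries.coeff_one]
    | succ k => simp [coeff_succ_X_mul, PowerSeries.coeff_one, PowerSeries.coeff_C, PowerSeries.coeff_X]



variable {nx ny : ℕ}

def F (x : Fin nx → ℝ) (y : Fin ny → ℝ) : PS :=
  (∏ i, (1 - PowerSeries.C (y i) * PowerSeries.X)) * ∏ j, S (x j)

def Pi0 (x : Fin nx → ℝ) (y : Fin ny → ℝ) : PS :=
  (∑ j, PowerSeries.C (x j) * PowerSeries.X * S (x j))
    + ∑ i, -(PowerSeries.C (y i) * PowerSeries.X) * S (y i)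

lemma D_F (x : Fin nx → ℝ) (y : Fin ny → ℝ) : D (F x y) = Pi0 x y * F x y := by
  rw [F, D_mul,
    D_prod univ (fun i => 1 - PowerSeries.C (y i) * PowerSeries.X)
      (fun i => -(PowerSeries.C (y i) * PowerSeries.X) * S (y i))
      (fun i _ => D_lin (y i)),
    D_prod univ (fun j => S (x j)) (fun j => PowerSeries.C (x j) * PowerSeries.X * S (x j))
      (fun j _ => D_S (x j)),
    Pi0]
  ring

lemma coeff_CXS (z : ℝ) (k : ℕ) :
    PowerSeries.coeff k (PowerSeries.C z * PowerSeries.X * S z)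
      = if k = 0 then 0 else z ^ k := by
  have : PowerSeries.C z * PowerSeries.X * S z = PowerSeries.X * (PowerSeries.C z * S z) := by
    ring
  rw [this]
  cases k with
  | zero => simp
  | succ n => simp [coeff_succ_X_mul, S, coeff_mk, pow_succ, mul_comm]

lemma coeff_Pi0 (x : Fin nx → ℝ) (y : Fin ny → ℝ) (k : ℕ) (hk : 1 ≤ k) :
    PowerSeries.coeff k (Pi0 x y) = ∑ j, x j ^ k - ∑ i, y i ^ k := by
  have hk' : k ≠ 0 := by omega
  rw [Pi0, map_add, map_sum, map_sum]
  simp only [neg_mul, map_neg, coeff_CXS, if_neg hk']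
  rw [sub_eq_add_neg, ← Finset.sum_neg_distrib]

lemma coeff_Pi0_zero (x : Fin nx → ℝ) (y : Fin ny → ℝ) :
    PowerSeries.coeff 0 (Pi0 x y) = 0 := by
  rw [Pi0, map_add, map_sum, map_sum]
  simp [coeff_CXS]

lemma F_zero (x : Fin nx → ℝ) (y : Fin ny → ℝ) : PowerSeries.coeff 0 (F x y) = 1 := by
  rw [PowerSeries.coeff_zero_eq_constantCoeff, F, map_mul, map_prod, map_prod]
  simp [S, PowerSeries.constantCoeff_mk]

lemma F_rec (x : Fin nx → ℝ) (y : Fin ny → ℝ) (k : ℕ) (hk : 1 ≤ k) :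
    (k : ℝ) * PowerSeries.coeff k (F x y)
      = ∑ j ∈ Icc 1 k, (∑ t, x t ^ j - ∑ t, y t ^ j) * PowerSeries.coeff (k - j) (F x y) := by
  have h := congrArg (PowerSeries.coeff k) (D_F x y)
  rw [coeff_D, PowerSeries.coeff_mul, Finset.Nat.sum_antidiagonal_eq_sum_range_succ_mk] at h
  rw [h, Finset.sum_range_succ']
  simp only [coeff_Pi0_zero, zero_mul, add_zero, Nat.sub_zero]
  rw [← Finset.Ico_add_one_right_eq_Icc, Finset.sum_Ico_eq_sum_range]
  simp only [Nat.add_sub_cancel]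
  refine Finset.sum_congr rfl fun i hi => ?_
  rw [Finset.mem_range] at hi
  rw [Nat.add_comm 1 i, coeff_Pi0 x y (i+1) (by omega)]

lemma F_mul_P (x : Fin nx → ℝ) (y : Fin ny → ℝ) :
    F x y * ∏ j, (1 - PowerSeries.C (x j) * PowerSeries.X)
      = ∏ i, (1 - PowerSeries.C (y i) * PowerSeries.X) := by
  rw [F, mul_assoc, ← Finset.prod_mul_distrib]
  have : ∀ j : Fin nx, S (x j) * (1 - PowerSeries.C (x j) * PowerSeries.X) = 1 := by
    intro j; rw [mul_comm]; exact geom (x j)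
  simp [this]



lemma exists_perm {n : ℕ} {f g : Fin n → ℝ}
    (h : Multiset.map f Finset.univ.val = Multiset.map g Finset.univ.val) :
    ∃ σ : Equiv.Perm (Fin n), ∀ j, g j = f (σ j) := by
  rw [Fin.univ_val_map, Fin.univ_val_map, Multiset.coe_eq_coe] at h
  set σf := Tuple.sort f
  set σg := Tuple.sort g
  have hs1 : (List.ofFn (f ∘ σf)).SortedLE := (Tuple.monotone_sort f).sortedLE_ofFn
  have hs2 : (List.ofFn (g ∘ σg)).SortedLE := (Tuple.monotone_sort g).sortedLE_ofFn
  have hp : (List.ofFn (f ∘ σf)).Perm (List.ofFn (g ∘ σg)) :=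
    ((Equiv.Perm.ofFn_comp_perm σf f).trans h).trans (Equiv.Perm.ofFn_comp_perm σg g).symm
  have heq : f ∘ σf = g ∘ σg := List.ofFn_injective (hp.eq_of_sortedLE hs1 hs2)
  refine ⟨σg.symm.trans σf, fun j => ?_⟩
  have := congrFun heq (σg.symm j)
  simpa using this.symm

lemma reflect_prod {n : ℕ} (f : Fin n → ℝ) (s : Finset (Fin n)) :
    Polynomial.reflect s.card (∏ j ∈ s, (Polynomial.X - Polynomial.C (f j)))
      = ∏ j ∈ s, (1 - Polynomial.C (f j) * Polynomial.X) := by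
  classical
  induction s using Finset.induction_on with
  | empty => simp
  | insert a s' hni ih =>
    have hrefl1 : Polynomial.reflect 1 (Polynomial.X - Polynomial.C (f a))
        = 1 - Polynomial.C (f a) * Polynomial.X := by
      have : (Polynomial.X - Polynomial.C (f a) : Polynomial ℝ)
          = Polynomial.X ^ 1 + Polynomial.C (-(f a)) * Polynomial.X ^ 0 := by
        simp [sub_eq_add_neg]
      rw [this, Polynomial.reflect_add, Polynomial.reflect_monomial,
        Polynomial.reflect_C_mul_X_pow]
      simp [sub_eq_add_neg]
    rw [Finset.card_insert_of_notMem hni, Finset.prod_insert hni, Finset.prod_insert hni,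
      ← hrefl1, ← ih, add_comm s'.card 1]
    exact Polynomial.reflect_mul _ _ (Polynomial.natDegree_X_sub_C (f a)).le
      (le_trans (Polynomial.natDegree_prod_le _ _) (by simp [Polynomial.natDegree_X_sub_C]))

lemma multiset_of_prod_eq {n : ℕ} (f g : Fin n → ℝ)
    (h : ∏ j, (1 - Polynomial.C (f j) * Polynomial.X)
        = ∏ j, (1 - Polynomial.C (g j) * Polynomial.X)) :
    ∃ σ : Equiv.Perm (Fin n), ∀ j, g j = f (σ j) := by
  apply exists_perm
  have hc : (Finset.univ : Finset (Fin n)).card = n := Finset.card_univ.trans (Fintype.card_fin n)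
  have h2 : Polynomial.reflect n (∏ j, (Polynomial.X - Polynomial.C (f j)))
      = Polynomial.reflect n (∏ j, (Polynomial.X - Polynomial.C (g j))) := by
    have h1 := reflect_prod f Finset.univ
    have h2 := reflect_prod g Finset.univ
    rw [hc] at h1 h2
    rw [h1, h2, h]
  have h3 : (∏ j, (Polynomial.X - Polynomial.C (f j)))
      = ∏ j, (Polynomial.X - Polynomial.C (g j)) := by
    ext i
    have := congrArg (fun p => Polynomial.coeff p (Polynomial.revAt n i)) h2
    simpa [Polynomial.coeff_reflect, Polynomial.revAt_invol] using this
  have hroots : ∀ h : Fin n → ℝ, (∏ j, (Polynomial.X - Polynomial.C (h j))).roots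
      = Multiset.map h Finset.univ.val := by
    intro h
    have := Polynomial.roots_multiset_prod_X_sub_C (Multiset.map h Finset.univ.val)
    rw [Multiset.map_map] at this
    rw [Finset.prod_eq_multiset_prod]
    simpa [Function.comp] using this
  rw [← hroots f, ← hroots g, h3]


lemma hankel (nx ny : ℕ) (a : ℤ → ℝ) (haneg : ∀ k : ℤ, k < 0 → a k = 0)
    (Fs : PS) (haF : ∀ k : ℕ, k ≤ nx + ny → a k = PowerSeries.coeff k Fs)
    (P Q : Polynomial ℝ) (hP : P ≠ 0) (hPd : P.natDegree < nx) (hQd : Q.natDegree < ny)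
    (hFP : Fs * (P : PS) = (Q : PS)) :
    (Matrix.of fun (i j : Fin nx) => a ((ny : ℤ) + i - j)).det = 0 := by
  rw [← Matrix.exists_mulVec_eq_zero_iff]
  refine ⟨fun j => P.coeff j, ?_, ?_⟩
  · intro hzero
    have := congrFun hzero ⟨P.natDegree, hPd⟩
    exact Polynomial.leadingCoeff_ne_zero.mpr hP this
  · funext i
    have hiK : (ny + i : ℕ) ≤ nx + ny := by omega
    set n : ℕ := ny + i with hn
    have key : ∀ t : ℕ, t ≤ n → a ((ny : ℤ) + i - t) = PowerSeries.coeff (n - t) Fs := by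
      intro t ht
      have : ((ny : ℤ) + i - t) = ((n - t : ℕ) : ℤ) := by
        push_cast [hn]; omega
      rw [this, ← haF _ (by omega)]
    have h1 : (Matrix.of fun (i j : Fin nx) => a ((ny : ℤ) + i - j)).mulVec
          (fun j : Fin nx => P.coeff j) i
        = ∑ t ∈ Finset.range nx, P.coeff t * a ((ny : ℤ) + i - t) := by
      rw [Matrix.mulVec, dotProduct]
      rw [Finset.sum_range fun t => P.coeff t * a ((ny : ℤ) + i - t)]
      exact Finset.sum_congr rfl fun j _ => by rw [Matrix.of_apply]; ring
    have h2 : ∑ t ∈ Finset.range nx, P.coeff t * a ((ny : ℤ) + i - t)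
        = ∑ t ∈ Finset.range (max nx (n + 1)), P.coeff t * a ((ny : ℤ) + i - t) := by
      refine Finset.sum_subset (Finset.range_subset_range.mpr (le_max_left _ _)) ?_
      intro t _ ht
      rw [Finset.mem_range, not_lt] at ht
      rw [Polynomial.coeff_eq_zero_of_natDegree_lt (by omega), zero_mul]
    have h3 : ∑ t ∈ Finset.range (max nx (n + 1)), P.coeff t * a ((ny : ℤ) + i - t)
        = ∑ t ∈ Finset.range (n + 1), P.coeff t * a ((ny : ℤ) + i - t) := by
      symm
      refine Finset.sum_subset (Finset.range_subset_range.mpr (le_max_right _ _)) ?_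
      intro t _ ht
      rw [Finset.mem_range, not_lt] at ht
      rw [haneg _ (by push_cast [hn]; omega), mul_zero]
    have h4 : ∑ t ∈ Finset.range (n + 1), P.coeff t * a ((ny : ℤ) + i - t)
        = PowerSeries.coeff n ((P : PS) * Fs) := by
      rw [PowerSeries.coeff_mul, Finset.Nat.sum_antidiagonal_eq_sum_range_succ_mk]
      refine Finset.sum_congr rfl fun t ht => ?_
      rw [Finset.mem_range] at ht
      rw [Polynomial.coeff_coe, key t (by omega)]
    have h5 : PowerSeries.coeff n ((P : PS) * Fs) = 0 := by
      rw [mul_comm, hFP, Polynomial.coeff_coe]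
      exact Polynomial.coeff_eq_zero_of_natDegree_lt (by omega)
    rw [h1, h2, h3, h4, h5]
    rfl

lemma coprime_of_det_ne_zero (nx ny : ℕ) (a : ℤ → ℝ) (haneg : ∀ k : ℤ, k < 0 → a k = 0)
    (Fs : PS) (haF : ∀ k : ℕ, k ≤ nx + ny → a k = PowerSeries.coeff k Fs)
    (P Q : Polynomial ℝ) (hP : P ≠ 0) (hQ : Q ≠ 0)
    (hPd : P.natDegree ≤ nx) (hQd : Q.natDegree ≤ ny)
    (hFP : Fs * (P : PS) = (Q : PS))
    (hA1 : (Matrix.of fun (i j : Fin nx) => a ((ny : ℤ) + i - j)).det ≠ 0) :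
    IsCoprime P Q := by
  by_contra hcop
  set g := EuclideanDomain.gcd P Q with hg
  have hgu : ¬IsUnit g := fun h => hcop (EuclideanDomain.gcd_isUnit_iff.mp h)
  have hg0 : g ≠ 0 := fun h => hP (EuclideanDomain.gcd_eq_zero_iff.mp (hg ▸ h)).1
  obtain ⟨P1, hP1⟩ := EuclideanDomain.gcd_dvd_left P Q
  obtain ⟨Q1, hQ1⟩ := EuclideanDomain.gcd_dvd_right P Q
  have hP10 : P1 ≠ 0 := fun h => hP (by rw [hP1, h, mul_zero])
  have hQ10 : Q1 ≠ 0 := fun h => hQ (by rw [hQ1, h, mul_zero])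
  have hgdeg : 1 ≤ g.natDegree := by
    by_contra hd
    push_neg at hd
    interval_cases hdeg : g.natDegree
    · exact hgu (Polynomial.isUnit_iff.mpr ⟨g.coeff 0,
        isUnit_iff_ne_zero.mpr (fun h => hg0 (by
          rw [Polynomial.eq_C_of_natDegree_eq_zero hdeg, h, map_zero])),
        (Polynomial.eq_C_of_natDegree_eq_zero hdeg).symm⟩)
  have hP1d : P1.natDegree < nx := by
    have := Polynomial.natDegree_mul hg0 hP10
    rw [← hP1] at this
    omega
  have hQ1d : Q1.natDegree < ny := by
    have := Polynomial.natDegree_mul hg0 hQ10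
    rw [← hQ1] at this
    omega
  have hcancel : Fs * (P1 : PS) = (Q1 : PS) := by
    have hgPS : (g : PS) ≠ 0 := fun h => hg0 (Polynomial.coe_eq_zero_iff.mp h)
    apply mul_left_cancel₀ hgPS
    have h2 : Fs * ((g * P1 : Polynomial ℝ) : PS) = ((g * Q1 : Polynomial ℝ) : PS) := by
      rw [← hP1, ← hQ1]; exact hFP
    push_cast at h2
    rw [show (g : PS) * (Fs * (P1 : PS)) = Fs * ((g : PS) * (P1 : PS)) by ring]
    exact h2
  exact hA1 (hankel nx ny a haneg Fs haF P1 Q1 hP10 hP1d hQ1d hcancel)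



lemma coe_prod_lin {n : ℕ} (z : Fin n → ℝ) :
    ((∏ j, (1 - Polynomial.C (z j) * Polynomial.X) : Polynomial ℝ) : PS)
      = ∏ j, (1 - PowerSeries.C (z j) * PowerSeries.X) := by
  rw [← Polynomial.coeToPowerSeries.ringHom_apply, map_prod]
  refine Finset.prod_congr rfl fun j _ => ?_
  rw [map_sub, map_mul, map_one, Polynomial.coeToPowerSeries.ringHom_apply,
    Polynomial.coeToPowerSeries.ringHom_apply, Polynomial.coe_C, Polynomial.coe_X]

lemma coeff_zero_prod_lin {n : ℕ} (z : Fin n → ℝ) :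
    (∏ j, (1 - Polynomial.C (z j) * Polynomial.X) : Polynomial ℝ).coeff 0 = 1 := by
  have := congrArg (PowerSeries.coeff 0) (coe_prod_lin z)
  rw [Polynomial.coeff_coe] at this
  rw [this, PowerSeries.coeff_zero_eq_constantCoeff, map_prod]
  simp

lemma natDegree_prod_lin {n : ℕ} (z : Fin n → ℝ) :
    (∏ j, (1 - Polynomial.C (z j) * Polynomial.X) : Polynomial ℝ).natDegree ≤ n := by
  refine le_trans (Polynomial.natDegree_prod_le _ _) ?_
  refine le_trans (Finset.sum_le_card_nsmul _ _ 1 fun j _ => ?_) (by simp)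
  refine le_trans (Polynomial.natDegree_sub_le _ _) ?_
  have h1 : (1 : Polynomial ℝ).natDegree = 0 := Polynomial.natDegree_one
  have h2 : (Polynomial.C (z j) * Polynomial.X).natDegree ≤ 1 :=
    le_trans (Polynomial.natDegree_C_mul_le _ _) Polynomial.natDegree_X_le
  omega

end S10

open S10 in
/-- Uniqueness: if the Hankel matrix `A_1` built from the exponential transform of
the moments is nonsingular, then any two solutions of the moment problem
`m_k = ∑_{j=1}^{n_x} x_j^k - ∑_{j=1}^{n_y} y_j^k` (`k = 1,…,K = n_x+n_y`) coincide
up to a reordering of the branch values. -/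
theorem stmt_10 (nx ny : ℕ) (hnx : 0 < nx) (hny : 0 < ny) (m : ℕ → ℝ) (a : ℤ → ℝ)
    (ha0 : a 0 = 1) (haneg : ∀ k : ℤ, k < 0 → a k = 0)
    (harec : ∀ k : ℕ, 1 ≤ k → k ≤ nx + ny →
      (k : ℝ) * a k = ∑ j ∈ Icc 1 k, m j * a ((k : ℤ) - j))
    (hA1 : (Matrix.of fun (i j : Fin nx) => a ((ny : ℤ) + i - j)).det ≠ 0)
    (x x' : Fin nx → ℝ) (y y' : Fin ny → ℝ)
    (hsol : ∀ k : ℕ, 1 ≤ k → k ≤ nx + ny → m k = ∑ j, x j ^ k - ∑ i, y i ^ k)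
    (hsol' : ∀ k : ℕ, 1 ≤ k → k ≤ nx + ny → m k = ∑ j, x' j ^ k - ∑ i, y' i ^ k) :
    (∃ σ : Equiv.Perm (Fin nx), ∀ j, x' j = x (σ j)) ∧
      (∃ τ : Equiv.Perm (Fin ny), ∀ i, y' i = y (τ i)) := by
  classical
  -- Step 1: the exponential transform coefficients agree with the coefficients of F
  have haF_gen : ∀ (xx : Fin nx → ℝ) (yy : Fin ny → ℝ),
      (∀ k : ℕ, 1 ≤ k → k ≤ nx + ny → m k = ∑ j, xx j ^ k - ∑ i, yy i ^ k) →
      ∀ k : ℕ, k ≤ nx + ny → a k = PowerSeries.coeff k (F xx yy) := by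
    intro xx yy hs k
    induction k using Nat.strong_induction_on with
    | _ k ih =>
      intro hkK
      rcases Nat.eq_zero_or_pos k with hk0 | hk1
      · subst hk0
        rw [Nat.cast_zero] at *
        simpa [F_zero xx yy] using ha0
      · have hrec := harec k hk1 hkK
        have hF := F_rec xx yy k hk1
        have hsum : ∑ j ∈ Icc 1 k, m j * a ((k : ℤ) - j)
            = ∑ j ∈ Icc 1 k, (∑ t, xx t ^ j - ∑ t, yy t ^ j)
                * PowerSeries.coeff (k - j) (F xx yy) := by
          refine Finset.sum_congr rfl fun j hj => ?_
          rw [Finset.mem_Icc] at hj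
          have hcast : ((k : ℤ) - j) = ((k - j : ℕ) : ℤ) := by push_cast; omega
          rw [hcast, ih (k - j) (by omega) (by omega), hs j hj.1 (by omega)]
        have : (k : ℝ) * a k = (k : ℝ) * PowerSeries.coeff k (F xx yy) := by
          rw [hrec, hsum, ← hF]
        have hkne : (k : ℝ) ≠ 0 := by positivity
        exact mul_left_cancel₀ hkne this
  have haF : ∀ k : ℕ, k ≤ nx + ny → a k = PowerSeries.coeff k (F x y) :=
    haF_gen x y hsol
  have haF' : ∀ k : ℕ, k ≤ nx + ny → a k = PowerSeries.coeff k (F x' y') :=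
    haF_gen x' y' hsol'
  have hcoeffeq : ∀ k : ℕ, k ≤ nx + ny →
      PowerSeries.coeff k (F x y) = PowerSeries.coeff k (F x' y') := by
    intro k hk; rw [← haF k hk, haF' k hk]
  -- Step 2: polynomials
  set Px : Polynomial ℝ := ∏ j, (1 - Polynomial.C (x j) * Polynomial.X) with hPxdef
  set Qy : Polynomial ℝ := ∏ i, (1 - Polynomial.C (y i) * Polynomial.X) with hQydef
  set Px' : Polynomial ℝ := ∏ j, (1 - Polynomial.C (x' j) * Polynomial.X) with hPx'def
  set Qy' : Polynomial ℝ := ∏ i, (1 - Polynomial.C (y' i) * Polynomial.X) with hQy'def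
  have dPx : Px.natDegree ≤ nx := by rw [hPxdef]; exact natDegree_prod_lin x
  have dQy : Qy.natDegree ≤ ny := by rw [hQydef]; exact natDegree_prod_lin y
  have dPx' : Px'.natDegree ≤ nx := by rw [hPx'def]; exact natDegree_prod_lin x'
  have dQy' : Qy'.natDegree ≤ ny := by rw [hQy'def]; exact natDegree_prod_lin y'
  have hPx0 : Px.coeff 0 = 1 := coeff_zero_prod_lin x
  have hQy0 : Qy.coeff 0 = 1 := coeff_zero_prod_lin y
  have hPx'0 : Px'.coeff 0 = 1 := coeff_zero_prod_lin x'
  have hQy'0 : Qy'.coeff 0 = 1 := coeff_zero_prod_lin y'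
  have hPxne : Px ≠ 0 := fun h => by simp [h] at hPx0
  have hQyne : Qy ≠ 0 := fun h => by simp [h] at hQy0
  have hPx'ne : Px' ≠ 0 := fun h => by simp [h] at hPx'0
  have hQy'ne : Qy' ≠ 0 := fun h => by simp [h] at hQy'0
  have hFPx : F x y * (Px : PS) = (Qy : PS) := by
    rw [hPxdef, hQydef, coe_prod_lin, coe_prod_lin]; exact F_mul_P x y
  have hFPx' : F x' y' * (Px' : PS) = (Qy' : PS) := by
    rw [hPx'def, hQy'def, coe_prod_lin, coe_prod_lin]; exact F_mul_P x' y'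
  have hcopr : IsCoprime Px Qy :=
    coprime_of_det_ne_zero nx ny a haneg (F x y) haF Px Qy hPxne hQyne
      dPx dQy hFPx hA1
  have hcopr' : IsCoprime Px' Qy' :=
    coprime_of_det_ne_zero nx ny a haneg (F x' y') haF' Px' Qy' hPx'ne hQy'ne
      dPx' dQy' hFPx' hA1
  -- Step 3: cross identity
  have hcross : Qy * Px' = Qy' * Px := by
    have e1 : ((Qy * Px' : Polynomial ℝ) : PS) = F x y * ((Px : PS) * (Px' : PS)) := by
      rw [Polynomial.coe_mul, ← hFPx]; ring
    have e2 : ((Qy' * Px : Polynomial ℝ) : PS) = F x' y' * ((Px : PS) * (Px' : PS)) := by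
      rw [Polynomial.coe_mul, ← hFPx']; ring
    apply Polynomial.coe_inj.mp
    ext k
    by_cases hk : k ≤ nx + ny
    · rw [e1, e2, PowerSeries.coeff_mul, PowerSeries.coeff_mul]
      refine Finset.sum_congr rfl fun p hp => ?_
      rw [Finset.HasAntidiagonal.mem_antidiagonal] at hp
      rw [hcoeffeq p.1 (by omega)]
    · rw [Polynomial.coeff_coe, Polynomial.coeff_coe]
      have d1 : (Qy * Px').natDegree ≤ nx + ny :=
        le_trans (Polynomial.natDegree_mul_le) (by omega)
      have d2 : (Qy' * Px).natDegree ≤ nx + ny :=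
        le_trans (Polynomial.natDegree_mul_le) (by omega)
      rw [Polynomial.coeff_eq_zero_of_natDegree_lt (by omega),
        Polynomial.coeff_eq_zero_of_natDegree_lt (by omega)]
  -- Step 4: Px = Px' and Qy = Qy'
  have hd1 : Px ∣ Px' := by
    refine IsCoprime.dvd_of_dvd_mul_left hcopr ⟨Qy', ?_⟩
    linear_combination hcross
  have hd2 : Px' ∣ Px := by
    refine IsCoprime.dvd_of_dvd_mul_left hcopr' ⟨Qy, ?_⟩
    linear_combination -hcross
  obtain ⟨u, hu⟩ := associated_of_dvd_dvd hd1 hd2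
  obtain ⟨c, hc0, hcu⟩ := Polynomial.isUnit_iff.mp u.isUnit
  have hc1 : c = 1 := by
    have := congrArg (fun p => Polynomial.coeff p 0) hu
    simp only [← hcu, Polynomial.coeff_mul_C] at this
    rw [hPx0, one_mul] at this
    rw [this, hPx'0]
  have hPP : Px = Px' := by
    rw [← hu, ← hcu, hc1, map_one, mul_one]
  have hQQ : Qy = Qy' := by
    apply mul_right_cancel₀ hPxne
    rw [← hPP] at hcross
    exact hcross
  exact ⟨multiset_of_prod_eq x x' hPP, multiset_of_prod_eq y y' hQQ⟩
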